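/- With the setup of the combinatorial determinantal condition: if m ∈ ℤ^r is determinantal (i.e. N(m) = {0,1}), then for every k ∈ {1,...,r}: max(−d_k, −l_k) ≤ m_k ≤ d_k (s_0+···+s_n) − 1 + min(d_k − l_k, 0). -/

import Mathlib

/-- `P_k(m) = {z ∈ ℤ : m < z·d ≤ m + l}`, the integers in `(m/d, (m+l)/d]`. -/
def Pset (m : ℤ) (d l : ℕ) : Set ℤ := {z : ℤ | m < z * d ∧ z * d ≤ m + l}

lemma tb_mem_Pset {m : ℤ} {d : ℕ} (hd : 1 ≤ d) {l : ℕ} {z : ℤ} :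
    z ∈ Pset m d l ↔ z ∈ Finset.Icc (m / (d:ℤ) + 1) ((m + l) / (d:ℤ)) := by
  have hd' : (0:ℤ) < d := by exact_mod_cast hd
  simp only [Pset, Set.mem_setOf_eq, Finset.mem_Icc]
  rw [Int.add_one_le_iff]
  constructor
  · rintro ⟨h1, h2⟩
    refine ⟨?_, (Int.le_ediv_iff_mul_le hd').mpr h2⟩
    by_contra hc
    push_neg at hc
    exact absurd ((Int.le_ediv_iff_mul_le hd').mp hc) (not_le.mpr h1)
  · rintro ⟨h1, h2⟩
    refine ⟨?_, (Int.le_ediv_iff_mul_le hd').mp h2⟩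
    by_contra hc
    push_neg at hc
    exact absurd ((Int.le_ediv_iff_mul_le hd').mpr hc) (not_le.mpr h1)

lemma tb_card_Pset {m : ℤ} {d : ℕ} (hd : 1 ≤ d) (l : ℕ) :
    (Finset.Icc (m / (d:ℤ) + 1) ((m + l) / (d:ℤ))).card ≤ l := by
  have hd' : (0:ℤ) < d := by exact_mod_cast hd
  rw [Int.card_Icc]
  rw [Int.toNat_le]
  have h1 : (m + l) / (d:ℤ) ≤ m / (d:ℤ) + l := by
    have : (m + l : ℤ) ≤ m + l * d := by
      have : (l:ℤ) ≤ l * d := le_mul_of_one_le_right (by positivity) (by exact_mod_cast hd)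
      omega
    calc (m + l) / (d:ℤ) ≤ (m + l * d) / (d:ℤ) := Int.ediv_le_ediv hd' this
      _ = m / (d:ℤ) + l := Int.add_mul_ediv_right m l hd'.ne'
  omega

lemma tb_cover_card {r : ℕ} (l d : Fin r → ℕ) (m : Fin r → ℤ) (hd : ∀ k, 1 ≤ d k)
    (K : Finset (Fin r)) (C : Finset ℤ)
    (hC : ∀ x ∈ C, ∃ k ∈ K, x ∈ Pset (m k) (d k) (l k)) :
    C.card ≤ ∑ k ∈ K, l k := by
  have hsub : C ⊆ K.biUnion
      (fun k => Finset.Icc (m k / (d k : ℤ) + 1) ((m k + l k) / (d k : ℤ))) := by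
    intro x hx
    obtain ⟨k, hk, hxk⟩ := hC x hx
    exact Finset.mem_biUnion.mpr ⟨k, hk, (tb_mem_Pset (hd k)).mp hxk⟩
  calc C.card ≤ _ := Finset.card_le_card hsub
    _ ≤ ∑ k ∈ K, (Finset.Icc (m k / (d k:ℤ) + 1) ((m k + l k) / (d k:ℤ))).card :=
        Finset.card_biUnion_le
    _ ≤ ∑ k ∈ K, l k := Finset.sum_le_sum (fun k _ => tb_card_Pset (hd k) (l k))

/-- The set of sums of `p` distinct entries of `s`. -/
def Sset {n : ℕ} (s : Fin (n + 1) → ℕ) (p : ℕ) : Set ℤ :=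
  {t : ℤ | ∃ A : Finset (Fin (n + 1)), A.card = p ∧ t = ∑ i ∈ A, (s i : ℤ)}

def sigA (n p : ℕ) : Finset (Fin (n + 1)) :=
  Finset.univ.filter (fun i : Fin (n + 1) => (i : ℕ) < p)

def sig {n : ℕ} (s : Fin (n + 1) → ℕ) (p : ℕ) : ℤ := ∑ i ∈ sigA n p, (s i : ℤ)

lemma tb_sigA_succ {n p : ℕ} (hp : p < n + 1) :
    sigA n (p + 1) = insert (⟨p, hp⟩ : Fin (n + 1)) (sigA n p) := by
  ext i
  simp only [sigA, Finset.mem_filter, Finset.mem_univ, true_and, Finset.mem_insert,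
    Fin.ext_iff]
  omega

lemma tb_sigA_card {n : ℕ} : ∀ {p : ℕ}, p ≤ n + 1 → (sigA n p).card = p := by
  intro p
  induction p with
  | zero =>
    intro _
    simp [sigA]
  | succ q ih =>
    intro hq
    have hq' : q < n + 1 := hq
    rw [tb_sigA_succ hq', Finset.card_insert_of_notMem (by simp [sigA]),
      ih (le_of_lt hq')]

lemma tb_sig_mem {n : ℕ} (s : Fin (n + 1) → ℕ) {p : ℕ} (hp : p ≤ n + 1) :
    sig s p ∈ Sset s p := ⟨sigA n p, tb_sigA_card hp, rfl⟩

lemma tb_sig_nonneg {n : ℕ} (s : Fin (n + 1) → ℕ) (p : ℕ) : 0 ≤ sig s p :=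
  Finset.sum_nonneg (fun i _ => by positivity)

lemma tb_sig_succ {n : ℕ} (s : Fin (n + 1) → ℕ) {p : ℕ} (hp : p < n + 1) :
    sig s (p + 1) = (s ⟨p, hp⟩ : ℤ) + sig s p := by
  rw [sig, tb_sigA_succ hp, Finset.sum_insert (by simp [sigA])]
  rfl

lemma tb_sig_lt {n : ℕ} (s : Fin (n + 1) → ℕ) (hs : ∀ i, 0 < s i) :
    ∀ {p q : ℕ}, p < q → q ≤ n + 1 → sig s p < sig s q := by
  intro p q
  induction q with
  | zero => omega
  | succ t ih =>
    intro hpq hq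
    have ht : t < n + 1 := hq
    have hst : (0:ℤ) < (s ⟨t, ht⟩ : ℤ) := by exact_mod_cast hs ⟨t, ht⟩
    rcases Nat.lt_or_ge p t with h | h
    · calc sig s p < sig s t := ih h (le_of_lt ht)
        _ < sig s (t + 1) := by rw [tb_sig_succ s ht]; omega
    · have : p = t := by omega
      subst this
      rw [tb_sig_succ s ht]; omega

lemma tb_sig_le {n : ℕ} (s : Fin (n + 1) → ℕ) (hs : ∀ i, 0 < s i)
    {p q : ℕ} (hpq : p ≤ q) (hq : q ≤ n + 1) : sig s p ≤ sig s q := by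
  rcases Nat.lt_or_ge p q with h | h
  · exact (tb_sig_lt s hs h hq).le
  · have : p = q := by omega
    subst this; exact le_rfl

lemma tb_sig_top {n : ℕ} (s : Fin (n + 1) → ℕ) :
    sig s (n + 1) = ∑ i, (s i : ℤ) := by
  rw [sig]
  congr 1
  ext i
  simp [sigA, i.isLt]; omega

/-- `q(z) = Σ_{P_k(m) < z} l_k`, where `P_k < z` means `z·d_k > m_k + l_k`. -/
def qval {r : ℕ} (l d : Fin r → ℕ) (m : Fin r → ℤ) (z : ℤ) : ℕ :=
  ∑ k ∈ Finset.univ.filter (fun k => m k + (l k : ℤ) < z * (d k : ℤ)), l k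


-- straddle below: interval containing x < z, with z uncovered, lies fully below z
lemma tb_below {r : ℕ} {l d : Fin r → ℕ} {m : Fin r → ℤ} {z x : ℤ}
    (hz : ∀ k, z ∉ Pset (m k) (d k) (l k)) {k : Fin r}
    (hx : x ∈ Pset (m k) (d k) (l k)) (hlt : x < z) :
    m k + (l k : ℤ) < z * (d k : ℤ) := by
  obtain ⟨h1, h2⟩ := hx
  by_contra hc
  push_neg at hc
  have hxz : x * (d k : ℤ) ≤ z * (d k : ℤ) :=
    mul_le_mul_of_nonneg_right hlt.le (by positivity)
  exact hz k ⟨lt_of_lt_of_le h1 hxz, hc⟩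

-- strengthened count-below
lemma tb_qval_ge {r : ℕ} (l d : Fin r → ℕ) (m : Fin r → ℤ) (hd : ∀ k, 1 ≤ d k) (z : ℤ)
    (hz : ∀ k, z ∉ Pset (m k) (d k) (l k)) (C : Finset ℤ)
    (hC : ∀ x ∈ C, x < z ∧ ∃ k, x ∈ Pset (m k) (d k) (l k)) :
    C.card ≤ qval l d m z := by
  refine le_trans (tb_cover_card l d m hd _ C ?_) (le_of_eq rfl)
  intro x hx
  obtain ⟨hlt, k, hk⟩ := hC x hx
  exact ⟨k, Finset.mem_filter.mpr ⟨Finset.mem_univ k, tb_below hz hk hlt⟩, hk⟩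

lemma tb_qval_ge' {r : ℕ} (l d : Fin r → ℕ) (m : Fin r → ℤ) (hd : ∀ k, 1 ≤ d k) (z : ℤ)
    (hz : ∀ k, z ∉ Pset (m k) (d k) (l k)) (C : Finset ℤ)
    (hC : ∀ x ∈ C, x < z ∧ ∃ k, x ∈ Pset (m k) (d k) (l k))
    (K0 : Fin r) (hK0 : m K0 + (l K0 : ℤ) < z * (d K0 : ℤ))
    (hK0C : ∀ x ∈ C, x ∉ Pset (m K0) (d K0) (l K0)) :
    C.card + l K0 ≤ qval l d m z := by
  classical
  set K : Finset (Fin r) :=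
    Finset.univ.filter (fun k => m k + (l k : ℤ) < z * (d k : ℤ)) with hK
  have hK0K : K0 ∈ K := Finset.mem_filter.mpr ⟨Finset.mem_univ _, hK0⟩
  have h1 : C.card ≤ ∑ k ∈ K.erase K0, l k := by
    refine tb_cover_card l d m hd _ C ?_
    intro x hx
    obtain ⟨hlt, k, hk⟩ := hC x hx
    refine ⟨k, Finset.mem_erase.mpr ⟨?_, Finset.mem_filter.mpr
      ⟨Finset.mem_univ k, tb_below hz hk hlt⟩⟩, hk⟩
    intro h; exact hK0C x hx (h ▸ hk)
  have h2 : ∑ k ∈ K.erase K0, l k + l K0 = ∑ k ∈ K, l k :=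
    Finset.sum_erase_add K l hK0K
  have : qval l d m z = ∑ k ∈ K, l k := rfl
  omega

-- straddle above
lemma tb_above {r : ℕ} {l d : Fin r → ℕ} {m : Fin r → ℤ} {z x : ℤ} {k : Fin r}
    (hx : x ∈ Pset (m k) (d k) (l k)) (hlt : z < x) :
    ¬ (m k + (l k : ℤ) < z * (d k : ℤ)) := by
  obtain ⟨h1, h2⟩ := hx
  push_neg
  calc z * (d k : ℤ) ≤ x * (d k : ℤ) := mul_le_mul_of_nonneg_right hlt.le (by positivity)
    _ ≤ m k + l k := h2

lemma tb_qval_le {r : ℕ} (l d : Fin r → ℕ) (m : Fin r → ℤ) (hd : ∀ k, 1 ≤ d k) (z : ℤ)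
    (C : Finset ℤ) (hC : ∀ x ∈ C, z < x ∧ ∃ k, x ∈ Pset (m k) (d k) (l k)) :
    qval l d m z + C.card ≤ ∑ k, l k := by
  classical
  have h1 : C.card ≤ ∑ k ∈ Finset.univ.filter
      (fun k => ¬ (m k + (l k : ℤ) < z * (d k : ℤ))), l k := by
    refine tb_cover_card l d m hd _ C ?_
    intro x hx
    obtain ⟨hlt, k, hk⟩ := hC x hx
    exact ⟨k, Finset.mem_filter.mpr ⟨Finset.mem_univ k, tb_above hk hlt⟩, hk⟩
  have h2 := Finset.sum_filter_add_sum_filter_not Finset.univ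
    (fun k => m k + (l k : ℤ) < z * (d k : ℤ)) l
  have : qval l d m z = ∑ k ∈ Finset.univ.filter
      (fun k => m k + (l k : ℤ) < z * (d k : ℤ)), l k := rfl
  omega

lemma tb_qval_le' {r : ℕ} (l d : Fin r → ℕ) (m : Fin r → ℤ) (hd : ∀ k, 1 ≤ d k) (z : ℤ)
    (C : Finset ℤ) (hC : ∀ x ∈ C, z < x ∧ ∃ k, x ∈ Pset (m k) (d k) (l k))
    (K0 : Fin r) (hK0 : ¬ (m K0 + (l K0 : ℤ) < z * (d K0 : ℤ)))
    (hK0C : ∀ x ∈ C, x ∉ Pset (m K0) (d K0) (l K0)) :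
    qval l d m z + C.card + l K0 ≤ ∑ k, l k := by
  classical
  set Kc : Finset (Fin r) :=
    Finset.univ.filter (fun k => ¬ (m k + (l k : ℤ) < z * (d k : ℤ))) with hKc
  have hK0K : K0 ∈ Kc := Finset.mem_filter.mpr ⟨Finset.mem_univ _, hK0⟩
  have h1 : C.card ≤ ∑ k ∈ Kc.erase K0, l k := by
    refine tb_cover_card l d m hd _ C ?_
    intro x hx
    obtain ⟨hlt, k, hk⟩ := hC x hx
    refine ⟨k, Finset.mem_erase.mpr ⟨?_, Finset.mem_filter.mpr
      ⟨Finset.mem_univ k, tb_above hk hlt⟩⟩, hk⟩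
    intro h; exact hK0C x hx (h ▸ hk)
  have h2 : ∑ k ∈ Kc.erase K0, l k + l K0 = ∑ k ∈ Kc, l k :=
    Finset.sum_erase_add Kc l hK0K
  have h3 := Finset.sum_filter_add_sum_filter_not Finset.univ
    (fun k => m k + (l k : ℤ) < z * (d k : ℤ)) l
  have h4 : qval l d m z = ∑ k ∈ Finset.univ.filter
      (fun k => m k + (l k : ℤ) < z * (d k : ℤ)), l k := rfl
  have h5 : ∑ k ∈ Finset.univ.filter
      (fun k => ¬ (m k + (l k : ℤ) < z * (d k : ℤ))), l k = ∑ k ∈ Kc, l k := rfl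
  omega

/-- `N(m) = { p − q(z) : p ∈ [0, n+1], z ∈ Q_p }` with `Q_p = S_p \ ⋃_k P_k(m)`. -/
def Nset {r n : ℕ} (l d : Fin r → ℕ) (s : Fin (n + 1) → ℕ) (m : Fin r → ℤ) : Set ℤ :=
  {ν : ℤ | ∃ p : ℕ, p ≤ n + 1 ∧ ∃ z : ℤ,
    (z ∈ Sset s p ∧ ∀ k, z ∉ Pset (m k) (d k) (l k)) ∧
    ν = (p : ℤ) - (qval l d m z : ℤ)}

lemma tb_sig_inj {n : ℕ} (s : Fin (n + 1) → ℕ) (hs : ∀ i, 0 < s i)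
    {a b : ℕ} (ha : a ≤ n + 1) (hb : b ≤ n + 1) (h : sig s a = sig s b) : a = b := by
  rcases lt_trichotomy a b with hab | hab | hab
  · exact absurd h (tb_sig_lt s hs hab hb).ne
  · exact hab
  · exact absurd h.symm (tb_sig_lt s hs hab ha).ne

theorem stmt9 (r n : ℕ) (hr : 1 ≤ r) (l d : Fin r → ℕ)
    (hl : ∀ k, 1 ≤ l k) (hd : ∀ k, 1 ≤ d k) (hsum : ∑ k, l k = n)
    (s : Fin (n + 1) → ℕ) (hs : ∀ i, 0 < s i) (hmono : Monotone s)
    (m : Fin r → ℤ) (hdet : Nset l d s m = {0, 1}) (k : Fin r) :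
    max (-(d k : ℤ)) (-(l k : ℤ)) ≤ m k ∧
    m k ≤ (d k : ℤ) * (∑ i, (s i : ℤ)) - 1 + min ((d k : ℤ) - (l k : ℤ)) 0 := by
  classical
  set S : ℤ := ∑ i, (s i : ℤ) with hS
  -- consequence of N(m) = {0,1}
  have key : ∀ p : ℕ, p ≤ n + 1 → (∀ j, sig s p ∉ Pset (m j) (d j) (l j)) →
      qval l d m (sig s p) ≤ p ∧ (p : ℤ) ≤ (qval l d m (sig s p) : ℤ) + 1 := by
    intro p hp hz
    have hmem : ((p : ℤ) - (qval l d m (sig s p) : ℤ)) ∈ Nset l d s m :=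
      ⟨p, hp, sig s p, ⟨⟨tb_sig_mem s hp, hz⟩, rfl⟩⟩
    rw [hdet] at hmem
    simp only [Set.mem_insert_iff, Set.mem_singleton_iff] at hmem
    rcases hmem with h | h <;> constructor <;> omega
  -- the set of uncovered indices
  set U : Finset ℕ := (Finset.range (n + 2)).filter
    (fun p => ∀ j, sig s p ∉ Pset (m j) (d j) (l j)) with hU
  have hUne : U.Nonempty := by
    by_contra hcon
    rw [Finset.not_nonempty_iff_eq_empty] at hcon
    have hcov : ∀ p, p ≤ n + 1 → ∃ j, sig s p ∈ Pset (m j) (d j) (l j) := by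
      intro p hp
      have hpU : p ∉ U := by rw [hcon]; exact Finset.notMem_empty p
      rw [hU, Finset.mem_filter] at hpU
      push_neg at hpU
      exact hpU (Finset.mem_range.mpr (by omega))
    set C : Finset ℤ := (Finset.range (n + 2)).image (sig s) with hC
    have hCcard : C.card = n + 2 := by
      rw [hC, Finset.card_image_of_injOn, Finset.card_range]
      intro a ha b hb hab
      simp only [Finset.coe_range, Set.mem_Iio] at ha hb
      exact tb_sig_inj s hs (by omega) (by omega) hab
    have hle : C.card ≤ ∑ j, l j := by
      refine tb_cover_card l d m hd Finset.univ C ?_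
      intro x hx
      rw [hC, Finset.mem_image] at hx
      obtain ⟨p, hp, rfl⟩ := hx
      obtain ⟨j, hj⟩ := hcov p (by simpa using Nat.lt_succ_iff.mp (Finset.mem_range.mp hp))
      exact ⟨j, Finset.mem_univ j, hj⟩
    omega
  set p₁ : ℕ := U.min' hUne with hp₁def
  set p₂ : ℕ := U.max' hUne with hp₂def
  have hp₁U : p₁ ∈ U := U.min'_mem hUne
  have hp₂U : p₂ ∈ U := U.max'_mem hUne
  rw [hU, Finset.mem_filter, Finset.mem_range] at hp₁U hp₂U
  have hp₁le : p₁ ≤ n + 1 := by omega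
  have hp₂le : p₂ ≤ n + 1 := by omega
  have hz₁ := hp₁U.2
  have hz₂ := hp₂U.2
  have hmin : ∀ p, p < p₁ → ∃ j, sig s p ∈ Pset (m j) (d j) (l j) := by
    intro p hp
    have hpU : p ∉ U := fun h => absurd (U.min'_le p h) (by omega)
    rw [hU, Finset.mem_filter] at hpU
    push_neg at hpU
    exact hpU (Finset.mem_range.mpr (by omega))
  have hmax : ∀ p, p₂ < p → p ≤ n + 1 → ∃ j, sig s p ∈ Pset (m j) (d j) (l j) := by
    intro p hp hple
    have hpU : p ∉ U := fun h => absurd (U.le_max' p h) (by omega)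
    rw [hU, Finset.mem_filter] at hpU
    push_neg at hpU
    exact hpU (Finset.mem_range.mpr (by omega))
  constructor
  · ---- lower bound
    by_contra hcon
    push_neg at hcon
    rw [lt_sup_iff] at hcon
    -- first uncovered point and the covered points below it
    have hq1 : qval l d m (sig s p₁) ≤ p₁ := (key p₁ hp₁le hz₁).1
    set C₁ : Finset ℤ := (Finset.range p₁).image (sig s) with hC₁
    have hC₁card : C₁.card = p₁ := by
      rw [hC₁, Finset.card_image_of_injOn, Finset.card_range]
      intro a ha b hb hab
      simp only [Finset.coe_range, Set.mem_Iio] at ha hb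
      exact tb_sig_inj s hs (by omega) (by omega) hab
    have hC₁mem : ∀ x ∈ C₁, (0 ≤ x ∧ x < sig s p₁) ∧
        ∃ j, x ∈ Pset (m j) (d j) (l j) := by
      intro x hx
      rw [hC₁, Finset.mem_image] at hx
      obtain ⟨p, hp, rfl⟩ := hx
      rw [Finset.mem_range] at hp
      exact ⟨⟨tb_sig_nonneg s p, tb_sig_lt s hs hp hp₁le⟩, hmin p hp⟩
    by_cases hml : m k + (l k : ℤ) < 0
    · -- the interval lies entirely below 0
      have hK0 : m k + (l k : ℤ) < sig s p₁ * (d k : ℤ) := by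
        have h1 : (0:ℤ) ≤ sig s p₁ * (d k : ℤ) :=
          mul_nonneg (tb_sig_nonneg s p₁) (by positivity)
        omega
      have hge := tb_qval_ge' l d m hd (sig s p₁) hz₁ C₁
        (fun x hx => ⟨(hC₁mem x hx).1.2, (hC₁mem x hx).2⟩) k hK0 ?_
      · rw [hC₁card] at hge
        have := hl k
        omega
      · intro x hx hxP
        have hx0 : (0:ℤ) ≤ x := (hC₁mem x hx).1.1
        have : (0:ℤ) ≤ x * (d k : ℤ) := mul_nonneg hx0 (by positivity)
        have := hxP.2
        omega
    · -- m k < -d k, so -1 is covered by the k-th interval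
      push_neg at hml
      have hcon' : m k < -(d k : ℤ) := by
        rcases hcon with h | h
        · exact h
        · omega
      have hm1 : (-1 : ℤ) ∈ Pset (m k) (d k) (l k) := by
        constructor
        · have : (-1 : ℤ) * (d k : ℤ) = -(d k : ℤ) := by ring
          rw [this]; exact hcon'
        · have : (-1 : ℤ) * (d k : ℤ) = -(d k : ℤ) := by ring
          rw [this]
          have : (0:ℤ) ≤ (d k : ℤ) := by positivity
          omega
      have hnot : (-1 : ℤ) ∉ C₁ := by
        intro h
        have := (hC₁mem _ h).1.1
        omega
      have hge := tb_qval_ge l d m hd (sig s p₁) hz₁ (insert (-1 : ℤ) C₁) ?_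
      · rw [Finset.card_insert_of_notMem hnot, hC₁card] at hge
        omega
      · intro x hx
        rcases Finset.mem_insert.mp hx with rfl | hx
        · refine ⟨?_, k, hm1⟩
          have := tb_sig_nonneg s p₁
          omega
        · exact ⟨(hC₁mem x hx).1.2, (hC₁mem x hx).2⟩
  · ---- upper bound
    by_contra hcon
    push_neg at hcon
    have hq2 : (p₂ : ℤ) ≤ (qval l d m (sig s p₂) : ℤ) + 1 := (key p₂ hp₂le hz₂).2
    set C₃ : Finset ℤ := (Finset.Ioc p₂ (n + 1)).image (sig s) with hC₃
    have hC₃card : C₃.card = n + 1 - p₂ := by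
      rw [hC₃, Finset.card_image_of_injOn, Nat.card_Ioc]
      intro a ha b hb hab
      simp only [Finset.coe_Ioc, Set.mem_Ioc] at ha hb
      exact tb_sig_inj s hs ha.2 hb.2 hab
    have hC₃mem : ∀ x ∈ C₃, (sig s p₂ < x ∧ x ≤ S) ∧
        ∃ j, x ∈ Pset (m j) (d j) (l j) := by
      intro x hx
      rw [hC₃, Finset.mem_image] at hx
      obtain ⟨p, hp, rfl⟩ := hx
      rw [Finset.mem_Ioc] at hp
      refine ⟨⟨tb_sig_lt s hs hp.1 hp.2, ?_⟩, hmax p hp.1 hp.2⟩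
      rw [hS, ← tb_sig_top s]
      exact tb_sig_le s hs hp.2 le_rfl
    have hzS : sig s p₂ ≤ S := by
      rw [hS, ← tb_sig_top s]
      exact tb_sig_le s hs hp₂le le_rfl
    have hdpos : (0:ℤ) < (d k : ℤ) := by exact_mod_cast hd k
    by_cases hA : (d k : ℤ) * S ≤ m k
    · -- interval entirely above S
      have hK0 : ¬ (m k + (l k : ℤ) < sig s p₂ * (d k : ℤ)) := by
        push_neg
        calc sig s p₂ * (d k : ℤ) ≤ S * (d k : ℤ) :=
              mul_le_mul_of_nonneg_right hzS hdpos.le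
          _ = (d k : ℤ) * S := mul_comm _ _
          _ ≤ m k := hA
          _ ≤ m k + (l k : ℤ) := by omega
      have hle := tb_qval_le' l d m hd (sig s p₂) C₃
        (fun x hx => ⟨(hC₃mem x hx).1.1, (hC₃mem x hx).2⟩) k hK0 ?_
      · rw [hC₃card, hsum] at hle
        have := hl k
        omega
      · intro x hx hxP
        have hxS : x ≤ S := (hC₃mem x hx).1.2
        have h1 : x * (d k : ℤ) ≤ (d k : ℤ) * S := by
          rw [mul_comm]
          exact mul_le_mul_of_nonneg_left hxS hdpos.le
        have := hxP.1
        omega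
    · -- interval reaches beyond S
      push_neg at hA
      have hml : (d k : ℤ) * (S + 1) ≤ m k + (l k : ℤ) := by
        rcases le_or_gt ((d k : ℤ) - (l k : ℤ)) 0 with h | h
        · rw [min_eq_left h] at hcon
          have : (d k : ℤ) * (S + 1) = (d k : ℤ) * S + (d k : ℤ) := by ring
          omega
        · rw [min_eq_right h.le] at hcon
          omega
      have hSP : (S + 1 : ℤ) ∈ Pset (m k) (d k) (l k) := by
        constructor
        · have h1 : (S + 1) * (d k : ℤ) = (d k : ℤ) * S + (d k : ℤ) := by ring
          omega
        · have h1 : (S + 1) * (d k : ℤ) = (d k : ℤ) * (S + 1) := mul_comm _ _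
          omega
      have hnot : (S + 1 : ℤ) ∉ C₃ := by
        intro h
        have := (hC₃mem _ h).1.2
        omega
      have hle := tb_qval_le l d m hd (sig s p₂) (insert (S + 1 : ℤ) C₃) ?_
      · rw [Finset.card_insert_of_notMem hnot, hC₃card, hsum] at hle
        omega
      · intro x hx
        rcases Finset.mem_insert.mp hx with rfl | hx
        · exact ⟨by omega, k, hSP⟩
        · exact ⟨(hC₃mem x hx).1.1, (hC₃mem x hx).2⟩
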